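/- Let A be a dually pseudocomplemented Heyting algebra, a, b ∈ A, α := (a* ∨ b**)**, β := (a ∨ a*)⁺, γ := a* ∨ b ∨ b*. Then (a → b)* = (α ∧ (β ∨ γ))*. -/
import Mathlib

lemma dense_inf_compl {A : Type*} [HeytingAlgebra A] (u v : A) (hv : vᶜ = ⊥) :
    (u ⊓ v)ᶜ = uᶜ := by
  apply le_antisymm
  · rw [le_compl_iff_disjoint_right, disjoint_iff_inf_le]
    have h2 : ((u ⊓ v)ᶜ ⊓ u) ⊓ v ≤ ⊥ := by
      calc ((u ⊓ v)ᶜ ⊓ u) ⊓ v = (u ⊓ v)ᶜ ⊓ (u ⊓ v) := by rw [inf_assoc]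
        _ = ⊥ := compl_inf_self _
        _ ≤ ⊥ := le_refl _
    have : (u ⊓ v)ᶜ ⊓ u ≤ vᶜ :=
      le_compl_iff_disjoint_right.2 (disjoint_iff_inf_le.2 h2)
    rwa [hv] at this
  · exact compl_anti inf_le_left

lemma himp_compl_eq {A : Type*} [HeytingAlgebra A] (a b : A) :
    (a ⇨ b)ᶜ = aᶜᶜ ⊓ bᶜ := by
  apply le_antisymm
  · exact le_inf (compl_anti compl_le_himp) (compl_anti le_himp)
  · rw [le_compl_iff_disjoint_right, disjoint_iff_inf_le]
    have key : bᶜ ⊓ (a ⇨ b) ≤ aᶜ := by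
      rw [le_compl_iff_disjoint_right, disjoint_iff_inf_le]
      calc bᶜ ⊓ (a ⇨ b) ⊓ a ≤ bᶜ ⊓ ((a ⇨ b) ⊓ a) := by rw [inf_assoc]
        _ ≤ bᶜ ⊓ b := inf_le_inf_left _ (by rw [inf_comm]; exact inf_himp_le)
        _ = ⊥ := compl_inf_self _
        _ ≤ ⊥ := le_refl _
    calc (aᶜᶜ ⊓ bᶜ) ⊓ (a ⇨ b) ≤ aᶜᶜ ⊓ (bᶜ ⊓ (a ⇨ b)) := by rw [inf_assoc]
      _ ≤ aᶜᶜ ⊓ aᶜ := inf_le_inf_left _ key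
      _ = ⊥ := compl_inf_self _
      _ ≤ ⊥ := le_refl _

theorem stmt16 (A : Type*) [HeytingAlgebra A] (p : A → A)
    (hp : ∀ x, x ⊔ p x = ⊤) (hleast : ∀ x z, x ⊔ z = ⊤ → p x ≤ z)
    (a b : A) :
    (a ⇨ b) ⇨ (⊥ : A) =
      ((((((a ⇨ (⊥ : A)) ⊔ ((b ⇨ (⊥ : A)) ⇨ (⊥ : A))) ⇨ (⊥ : A)) ⇨ (⊥ : A)) ⊓
        (p (a ⊔ (a ⇨ (⊥ : A))) ⊔ ((a ⇨ (⊥ : A)) ⊔ b ⊔ (b ⇨ (⊥ : A))))) ⇨ (⊥ : A)) := by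
  simp only [himp_bot]
  set β := p (a ⊔ aᶜ) with hβ
  have hγ : (β ⊔ (aᶜ ⊔ b ⊔ bᶜ))ᶜ = ⊥ := by
    refine le_antisymm ?_ bot_le
    rw [compl_sup, compl_sup, compl_sup]
    calc βᶜ ⊓ (aᶜᶜ ⊓ bᶜ ⊓ bᶜᶜ) ≤ aᶜᶜ ⊓ bᶜ ⊓ bᶜᶜ := inf_le_right
      _ ≤ bᶜ ⊓ bᶜᶜ := inf_le_inf_right _ inf_le_right
      _ = ⊥ := inf_compl_self _
      _ ≤ ⊥ := le_refl _
  rw [himp_compl_eq, dense_inf_compl _ _ hγ, compl_compl_compl, compl_sup,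
    compl_compl_compl]
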